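/- If a no-signaling strategy for the N-player GYNI game (with the parity promise on inputs) achieves winning probability ω, then there is a no-signaling strategy for the (N+1)-player game achieving winning probability ω/2; since ω_c(N+1) = ω_c(N)/2, the ratio ω/ω_c is non-decreasing in N. -/

import Mathlib

/-- A no-signaling box on `n` parties with binary inputs and outputs. -/
def NoSignaling {n : ℕ} (P : (Fin n → Bool) → (Fin n → Bool) → ℝ) : Prop :=
  ∀ (j : Fin n) (x x' : Fin n → Bool), (∀ i, i ≠ j → x i = x' i) →
    ∀ a : Fin n → Bool,
      ∑ b : Bool, P x (Function.update a j b) = ∑ b : Bool, P x' (Function.update a j b)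

/-- The parity promise on inputs: `x 1 ⊕ ⋯ ⊕ x n̂ = 0`, where `n̂ = n` for odd
`n` and `n̂ = n - 1` for even `n`. -/
def GyniPromise {n : ℕ} (x : Fin n → Bool) : Prop :=
  (Finset.univ.filter fun i : Fin n =>
      (i : ℕ) < (if n % 2 = 1 then n else n - 1) ∧ x i = true).card % 2 = 0


instance {n : ℕ} (x : Fin n → Bool) : Decidable (GyniPromise x) := by
  unfold GyniPromise; infer_instance
/-- The GYNI winning probability of a box, with inputs uniformly distributed
(with weight `1/2^{n-1}`) over the strings satisfying the parity promise. -/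
noncomputable def gyniScore {n : ℕ} [NeZero n]
    (P : (Fin n → Bool) → (Fin n → Bool) → ℝ) : ℝ :=
  ∑ x : Fin n → Bool,
    (if GyniPromise x then (1 / 2 ^ (n - 1) : ℝ) else 0) * P x (fun i => x (i + 1))

/-! ### Auxiliary definitions for the extension construction -/

/-- Packing a pair (rotated inputs of the old players, input of the new last
player) into an input string for `M+2` players. -/
def extPair (M : ℕ) (p : (Fin (M + 1) → Bool) × Bool) : Fin (M + 2) → Bool :=
  Fin.snoc (fun k => p.1 (k - 1)) p.2

/-- The (rotated) restriction of an `(M+2)`-string to the old `M+1` players. -/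
def rotFront (M : ℕ) (x : Fin (M + 2) → Bool) : Fin (M + 1) → Bool :=
  fun j => x ((j + 1).castSucc)

/-- The extended box: the old box acts (with rotated wiring) on the first
`M+1` players, and the new last player outputs its own input. -/
noncomputable def extBox (M : ℕ)
    (P : (Fin (M + 1) → Bool) → (Fin (M + 1) → Bool) → ℝ) :
    (Fin (M + 2) → Bool) → (Fin (M + 2) → Bool) → ℝ :=
  fun x a => P (rotFront M x) (rotFront M a) *
    (if a (Fin.last (M + 1)) = x (Fin.last (M + 1)) then 1 else 0)

section AuxLemmas

variable {M : ℕ}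

lemma extPair_last (p : (Fin (M + 1) → Bool) × Bool) :
    extPair M p (Fin.last (M + 1)) = p.2 := Fin.snoc_last _ _

lemma extPair_castSucc (p : (Fin (M + 1) → Bool) × Bool) (k : Fin (M + 1)) :
    extPair M p k.castSucc = p.1 (k - 1) := Fin.snoc_castSucc _ _ _

lemma zero_sub_one_eq_last : (0 : Fin (M + 1)) - 1 = Fin.last M := by
  rw [zero_sub]; exact (eq_neg_of_add_eq_zero_left (Fin.last_add_one M)).symm

lemma extPair_zero (p : (Fin (M + 1) → Bool) × Bool) :
    extPair M p 0 = p.1 (Fin.last M) := by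
  have h : (0 : Fin (M + 2)) = (0 : Fin (M + 1)).castSucc := rfl
  rw [h, extPair_castSucc, zero_sub_one_eq_last]

lemma rotFront_extPair (p : (Fin (M + 1) → Bool) × Bool) :
    rotFront M (extPair M p) = p.1 := by
  funext j
  show extPair M p ((j + 1).castSucc) = p.1 j
  rw [extPair_castSucc, add_sub_cancel_right]

lemma extPair_bijective : Function.Bijective (extPair M) := by
  rw [Fintype.bijective_iff_injective_and_card]
  constructor
  · intro p q h
    have hb : p.2 = q.2 := by
      have := congrFun h (Fin.last (M + 1))
      rwa [extPair_last, extPair_last] at this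
    have hz : p.1 = q.1 := by
      rw [← rotFront_extPair p, ← rotFront_extPair q, h]
    exact Prod.ext hz hb
  · simp [Fintype.card_fun, pow_succ]

lemma castSucc_add_ne_last (j : Fin (M + 1)) :
    (j + 1).castSucc ≠ Fin.last (M + 1) := (Fin.castSucc_lt_last _).ne

lemma rotFront_update_last (a : Fin (M + 2) → Bool) (b : Bool) :
    rotFront M (Function.update a (Fin.last (M + 1)) b) = rotFront M a := by
  funext j
  exact Function.update_of_ne (castSucc_add_ne_last j) _ _

lemma rotFront_update (a : Fin (M + 2) → Bool) (j₀ : Fin (M + 1)) (b : Bool) :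
    rotFront M (Function.update a j₀.castSucc b) =
      Function.update (rotFront M a) (j₀ - 1) b := by
  funext j
  by_cases hj : j = j₀ - 1
  · subst hj
    have h1 : (j₀ - 1 + 1).castSucc = j₀.castSucc := by rw [sub_add_cancel]
    show Function.update a j₀.castSucc b ((j₀ - 1 + 1).castSucc) = _
    rw [h1, Function.update_self, Function.update_self]
  · have h1 : (j + 1).castSucc ≠ j₀.castSucc := by
      intro hc
      apply hj
      have h2 := Fin.castSucc_injective _ hc
      rw [← h2, add_sub_cancel_right]
    show Function.update a j₀.castSucc b ((j + 1).castSucc) = _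
    rw [Function.update_of_ne h1, Function.update_of_ne hj]
    rfl

/-- Cyclic step: under the wrap identification `x 0 = x last`, shifting before
the `castSucc` embedding agrees with shifting after it. -/
lemma cyc_step (x : Fin (M + 2) → Bool) (hx : x 0 = x (Fin.last (M + 1)))
    (k : Fin (M + 1)) : x (k.castSucc + 1) = x ((k + 1).castSucc) := by
  by_cases h : k = Fin.last M
  · subst h
    have h1 : (Fin.last M).castSucc + 1 = Fin.last (M + 1) := by
      apply Fin.ext
      rw [Fin.val_add_one_of_lt (Fin.castSucc_lt_last _)]
      simp
    have h2 : (Fin.last M + 1 : Fin (M + 1)) = 0 := Fin.last_add_one M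
    rw [h1, h2]
    show x (Fin.last (M + 1)) = x ((0 : Fin (M + 1)).castSucc)
    rw [← hx]; rfl
  · have hk : k < Fin.last M := lt_of_le_of_ne (Fin.le_last k) h
    have h1 : k.castSucc + 1 = (k + 1).castSucc := by
      apply Fin.ext
      rw [Fin.val_add_one_of_lt (Fin.castSucc_lt_last _)]
      rw [Fin.coe_castSucc, Fin.coe_castSucc, Fin.val_add_one_of_lt hk]
    rw [h1]

lemma rotFront_shift (x : Fin (M + 2) → Bool) (hx : x 0 = x (Fin.last (M + 1))) :
    rotFront M (fun i => x (i + 1)) = fun j => rotFront M x (j + 1) := by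
  funext j
  show x ((j + 1).castSucc + 1) = x ((j + 1 + 1).castSucc)
  exact cyc_step x hx (j + 1)

lemma gyniPromise_iff_sum {n : ℕ} (x : Fin n → Bool) :
    GyniPromise x ↔
      (∑ i : Fin n, if (i : ℕ) < (if n % 2 = 1 then n else n - 1) ∧ x i = true
        then (1 : ZMod 2) else 0) = 0 := by
  unfold GyniPromise
  rw [Finset.sum_boole, ZMod.natCast_eq_zero_iff]
  omega

lemma promise_key (z : Fin (M + 1) → Bool) :
    GyniPromise (extPair M (z, z (Fin.last M))) ↔ GyniPromise z := by
  rw [gyniPromise_iff_sum, gyniPromise_iff_sum]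
  have hsum1 : (∑ i : Fin (M + 2),
      if (i : ℕ) < (if (M + 2) % 2 = 1 then M + 2 else M + 2 - 1) ∧
          extPair M (z, z (Fin.last M)) i = true then (1 : ZMod 2) else 0) =
      (∑ j : Fin (M + 1),
        if ((j + 1 : Fin (M + 1)) : ℕ) < (if (M + 2) % 2 = 1 then M + 2 else M + 2 - 1) ∧
          z j = true then (1 : ZMod 2) else 0) +
      (if M + 1 < (if (M + 2) % 2 = 1 then M + 2 else M + 2 - 1) ∧
          z (Fin.last M) = true then (1 : ZMod 2) else 0) := by
    rw [Fin.sum_univ_castSucc]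
    congr 1
    · refine Fintype.sum_equiv (Equiv.subRight (1 : Fin (M + 1))) _ _ fun k => ?_
      simp only [Equiv.subRight_apply, Fin.coe_castSucc, extPair_castSucc,
        sub_add_cancel]
    · simp [extPair_last, Fin.val_last]
  rw [hsum1]
  rcases Nat.mod_two_eq_zero_or_one M with h | h
  · rw [if_neg (by omega : ¬ (M + 2) % 2 = 1), if_pos (by omega : (M + 1) % 2 = 1)]
    rw [if_neg (fun hc => absurd hc.1 (by omega)), add_zero]
    have e : (∑ j : Fin (M + 1),
        if ((j + 1 : Fin (M + 1)) : ℕ) < M + 2 - 1 ∧ z j = true then (1 : ZMod 2) else 0) =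
        ∑ i : Fin (M + 1), if (i : ℕ) < M + 1 ∧ z i = true then (1 : ZMod 2) else 0 := by
      refine Finset.sum_congr rfl fun j _ => ?_
      have h1 : ((j + 1 : Fin (M + 1)) : ℕ) < M + 2 - 1 := by
        have := (j + 1 : Fin (M + 1)).isLt; omega
      have h2 : (j : ℕ) < M + 1 := j.isLt
      simp [h1, h2, (by omega : ((j + 1 : Fin (M + 1)) : ℕ) ≤ M)]
    rw [e]
  · rw [if_pos (by omega : (M + 2) % 2 = 1), if_neg (by omega : ¬ (M + 1) % 2 = 1)]
    have e1 : (∑ j : Fin (M + 1),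
        if ((j + 1 : Fin (M + 1)) : ℕ) < M + 2 ∧ z j = true then (1 : ZMod 2) else 0) =
        ∑ j : Fin (M + 1), if z j = true then (1 : ZMod 2) else 0 := by
      refine Finset.sum_congr rfl fun j _ => ?_
      have h1 : ((j + 1 : Fin (M + 1)) : ℕ) < M + 2 := by
        have := (j + 1 : Fin (M + 1)).isLt; omega
      simp [h1]
    have e2 : (if M + 1 < M + 2 ∧ z (Fin.last M) = true then (1 : ZMod 2) else 0) =
        (if z (Fin.last M) = true then (1 : ZMod 2) else 0) := by
      have harith : M + 1 < M + 2 := by omega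
      simp [harith]
    simp only [Nat.add_sub_cancel]
    rw [e1, e2]
    have e3 : (∑ j : Fin (M + 1), if z j = true then (1 : ZMod 2) else 0) =
        (∑ k : Fin M, if z k.castSucc = true then (1 : ZMod 2) else 0) +
          (if z (Fin.last M) = true then (1 : ZMod 2) else 0) :=
      Fin.sum_univ_castSucc _
    have e4 : (∑ i : Fin (M + 1), if (i : ℕ) < M ∧ z i = true then (1 : ZMod 2) else 0) =
        ∑ k : Fin M, if z k.castSucc = true then (1 : ZMod 2) else 0 := by
      rw [Fin.sum_univ_castSucc]
      rw [if_neg (fun hc => absurd hc.1 (by simp)), add_zero]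
      refine Finset.sum_congr rfl fun k _ => ?_
      have hk : (k : ℕ) < M := k.isLt
      simp [hk]
    rw [e3, e4, add_assoc]
    have hcc : ∀ c : ZMod 2, c + c = 0 := by decide
    rw [hcc, add_zero]

variable (P : (Fin (M + 1) → Bool) → (Fin (M + 1) → Bool) → ℝ)

lemma extBox_nonneg (hpos : ∀ x a, 0 ≤ P x a) (x a : Fin (M + 2) → Bool) :
    0 ≤ extBox M P x a := by
  apply mul_nonneg (hpos _ _)
  split <;> norm_num

lemma extBox_norm (hnorm : ∀ x, ∑ a : Fin (M + 1) → Bool, P x a = 1)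
    (x : Fin (M + 2) → Bool) : ∑ a : Fin (M + 2) → Bool, extBox M P x a = 1 := by
  rw [← Fintype.sum_bijective (extPair M) extPair_bijective
    (fun p => extBox M P x (extPair M p)) (fun a => extBox M P x a) (fun p => rfl)]
  rw [Fintype.sum_prod_type]
  have e1 : ∀ (z : Fin (M + 1) → Bool) (b : Bool),
      extBox M P x (extPair M (z, b)) =
        P (rotFront M x) z * (if b = x (Fin.last (M + 1)) then 1 else 0) := by
    intro z b
    unfold extBox
    rw [rotFront_extPair, extPair_last]
  calc (∑ z : Fin (M + 1) → Bool, ∑ b : Bool, extBox M P x (extPair M (z, b)))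
      = ∑ z : Fin (M + 1) → Bool, P (rotFront M x) z := by
        refine Finset.sum_congr rfl fun z _ => ?_
        rw [Fintype.sum_bool, e1, e1]
        cases x (Fin.last (M + 1)) <;> simp
    _ = 1 := hnorm _

lemma extBox_ns (hns : NoSignaling P) : NoSignaling (extBox M P) := by
  intro j x x' hxx' a
  induction j using Fin.lastCases with
  | last =>
    have hr : rotFront M x = rotFront M x' :=
      funext fun j' => hxx' _ (castSucc_add_ne_last j')
    have key : ∀ y : Fin (M + 2) → Bool,
        ∑ b : Bool, extBox M P y (Function.update a (Fin.last (M + 1)) b) =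
          P (rotFront M y) (rotFront M a) := by
      intro y
      simp only [extBox, rotFront_update_last, Function.update_self]
      rw [Fintype.sum_bool]
      cases y (Fin.last (M + 1)) <;> simp
    rw [key, key, hr]
  | cast j₀ =>
    have hlne : Fin.last (M + 1) ≠ j₀.castSucc := (Fin.castSucc_lt_last j₀).ne'
    have hxl : x (Fin.last (M + 1)) = x' (Fin.last (M + 1)) := hxx' _ hlne
    have hxr : ∀ i, i ≠ j₀ - 1 → rotFront M x i = rotFront M x' i := by
      intro i hi
      refine hxx' _ fun hc => hi ?_
      have h2 := Fin.castSucc_injective _ hc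
      rw [← h2, add_sub_cancel_right]
    have hmain := hns (j₀ - 1) _ _ hxr (rotFront M a)
    have key : ∀ y : Fin (M + 2) → Bool,
        ∑ b : Bool, extBox M P y (Function.update a j₀.castSucc b) =
          (∑ b : Bool, P (rotFront M y) (Function.update (rotFront M a) (j₀ - 1) b)) *
            (if a (Fin.last (M + 1)) = y (Fin.last (M + 1)) then 1 else 0) := by
      intro y
      rw [Finset.sum_mul]
      refine Finset.sum_congr rfl fun b _ => ?_
      simp only [extBox, rotFront_update]
      rw [Function.update_of_ne hlne]
    rw [key, key, hmain, hxl]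

lemma extBox_score_term (x : Fin (M + 2) → Bool) :
    extBox M P x (fun i => x (i + 1)) =
      (if x 0 = x (Fin.last (M + 1)) then (1 : ℝ) else 0) *
        P (rotFront M x) (fun j => rotFront M x (j + 1)) := by
  unfold extBox
  have hl : (fun i => x (i + 1)) (Fin.last (M + 1)) = x 0 := by
    show x (Fin.last (M + 1) + 1) = x 0
    rw [Fin.last_add_one]
  by_cases hx : x 0 = x (Fin.last (M + 1))
  · rw [if_pos (by rw [hl]; exact hx), if_pos hx, rotFront_shift x hx]
    ring
  · rw [if_neg (by rw [hl]; exact hx), if_neg hx]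
    ring

lemma extBox_score : gyniScore (extBox M P) = gyniScore P / 2 := by
  unfold gyniScore
  rw [← Fintype.sum_bijective (extPair M) extPair_bijective _ _ (fun p => rfl)]
  rw [Fintype.sum_prod_type]
  have e1 : ∀ z : Fin (M + 1) → Bool, ∀ b : Bool,
      (if GyniPromise (extPair M (z, b)) then (1 / 2 ^ (M + 2 - 1) : ℝ) else 0) *
        extBox M P (extPair M (z, b)) (fun i => extPair M (z, b) (i + 1)) =
      (if GyniPromise (extPair M (z, b)) then (1 / 2 ^ (M + 1) : ℝ) else 0) *
        ((if z (Fin.last M) = b then (1 : ℝ) else 0) *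
          P z (fun j => z (j + 1))) := by
    intro z b
    rw [extBox_score_term, extPair_zero, extPair_last, rotFront_extPair]
    rfl
  calc (∑ z : Fin (M + 1) → Bool, ∑ b : Bool,
        (if GyniPromise (extPair M (z, b)) then (1 / 2 ^ (M + 2 - 1) : ℝ) else 0) *
          extBox M P (extPair M (z, b)) (fun i => extPair M (z, b) (i + 1)))
      = ∑ z : Fin (M + 1) → Bool,
          (if GyniPromise z then (1 / 2 ^ (M + 1) : ℝ) else 0) * P z (fun j => z (j + 1)) := by
        refine Finset.sum_congr rfl fun z _ => ?_
        rw [Fintype.sum_bool, e1, e1]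
        have hp := promise_key (M := M) z
        cases hb : z (Fin.last M) with
        | false =>
          rw [hb] at hp
          simp only [hb, hp]
          norm_num
        | true =>
          rw [hb] at hp
          simp only [hb, hp]
          norm_num
    _ = (∑ x : Fin (M + 1) → Bool,
          (if GyniPromise x then (1 / 2 ^ (M + 1 - 1) : ℝ) else 0) * P x fun i => x (i + 1)) / 2 := by
        rw [Finset.sum_div]
        refine Finset.sum_congr rfl fun z _ => ?_
        simp only [Nat.add_sub_cancel]
        by_cases hz : GyniPromise z
        · rw [if_pos hz, if_pos hz, pow_succ]; ring
        · rw [if_neg hz, if_neg hz]; ring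

end AuxLemmas

/-- From any no-signaling strategy for the `N`-player GYNI game with the parity
promise achieving winning probability `ω`, one obtains a no-signaling strategy
for the `(N+1)`-player game achieving winning probability `ω/2`; since
`ω_c(N+1) = ω_c(N)/2 = 2^{-N}`, the ratio `ω/ω_c` is preserved. -/
theorem gyni_ns_extension (N : ℕ) [NeZero N]
    (P : (Fin N → Bool) → (Fin N → Bool) → ℝ)
    (hpos : ∀ x a, 0 ≤ P x a)
    (hnorm : ∀ x, ∑ a : Fin N → Bool, P x a = 1)
    (hns : NoSignaling P) :
    ∃ P' : (Fin (N + 1) → Bool) → (Fin (N + 1) → Bool) → ℝ,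
      (∀ x a, 0 ≤ P' x a) ∧ (∀ x, ∑ a : Fin (N + 1) → Bool, P' x a = 1) ∧
      NoSignaling P' ∧
      gyniScore P' = gyniScore P / 2 ∧
      gyniScore P' / (1 / 2 ^ N : ℝ) = gyniScore P / (1 / 2 ^ (N - 1) : ℝ) := by
  obtain ⟨M, rfl⟩ : ∃ M, N = M + 1 :=
    ⟨N - 1, (Nat.succ_pred_eq_of_pos (Nat.pos_of_ne_zero (NeZero.ne N))).symm⟩
  refine ⟨extBox M P, extBox_nonneg P hpos, extBox_norm P hnorm, extBox_ns P hns,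
    extBox_score P, ?_⟩
  rw [extBox_score P]
  have h2 : (2 : ℝ) ^ (M + 1) = 2 ^ M * 2 := pow_succ 2 M
  simp only [Nat.add_sub_cancel]
  rw [h2]
  field_simp
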